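/- Let E(ω), E'(ω) be two simple eigenvalues of the periodic off-diagonal Anderson operator H_ω(Λ) on Λ = [−L, L] with weights ω_j ∈ [α₀, β₀], with normalized eigenvectors u, v. If |E(ω) − E| + |E'(ω) − E'| ≤ e^{−L^β} where E ≠ E' are fixed positive energies and ΔE = |E − E'|, then ‖∇_ω(E(ω) − E'(ω))‖₂ ≥ (ΔE/(2β₀)) |Λ|^{−1/2}, where ∇_ω denotes the gradient with respect to the weights (ω_γ)_{γ∈Λ}. -/

import Mathlib

theorem stmt15 (L : ℕ) (α₀ β₀ : ℝ) (h0 : 0 < α₀) (hab : α₀ ≤ β₀)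
    (β : ℝ) (hβ : β ∈ Set.Ioo (1 / 2 : ℝ) 1)
    (E E' : ℝ) (hE : 0 < E) (hE' : 0 < E') (hne : E ≠ E')
    (ω : ZMod (2 * L + 1) → ℝ) (hω : ∀ γ, ω γ ∈ Set.Icc α₀ β₀)
    (Ev Ev' : ℝ) (u v : ZMod (2 * L + 1) → ℝ)
    (hunorm : ∑ γ, u γ ^ 2 = 1) (hvnorm : ∑ γ, v γ ^ 2 = 1)
    (hueig : ∀ n, ω n * (u n - u (n + 1)) - ω (n - 1) * (u (n - 1) - u n) = Ev * u n)
    (hveig : ∀ n, ω n * (v n - v (n + 1)) - ω (n - 1) * (v (n - 1) - v n) = Ev' * v n)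
    (hclose : |Ev - E| + |Ev' - E'| ≤ Real.exp (-(L : ℝ) ^ β))
    (hLbig : Real.exp (-(L : ℝ) ^ β) ≤ |E - E'| / 2) :
    |E - E'| / (2 * β₀) * (1 / Real.sqrt (2 * L + 1)) ≤
      Real.sqrt (∑ γ, ((u γ - u (γ + 1)) ^ 2 - (v γ - v (γ + 1)) ^ 2) ^ 2) := by
  have hβ0 : (0:ℝ) < β₀ := lt_of_lt_of_le h0 hab
  set D : ZMod (2 * L + 1) → ℝ :=
    fun γ => (u γ - u (γ + 1)) ^ 2 - (v γ - v (γ + 1)) ^ 2 with hDdef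
  -- key identity: ∑ ω γ (w γ - w (γ+1))² = Evv
  have key : ∀ (w : ZMod (2 * L + 1) → ℝ) (Evv : ℝ),
      (∑ γ, w γ ^ 2 = 1) →
      (∀ n, ω n * (w n - w (n + 1)) - ω (n - 1) * (w (n - 1) - w n) = Evv * w n) →
      ∑ γ, ω γ * (w γ - w (γ + 1)) ^ 2 = Evv := by
    intro w Evv hn heig
    have h1 : ∑ n, (ω n * (w n - w (n + 1)) - ω (n - 1) * (w (n - 1) - w n)) * w n = Evv := by
      have : ∀ n : ZMod (2 * L + 1),
          (ω n * (w n - w (n + 1)) - ω (n - 1) * (w (n - 1) - w n)) * w n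
            = Evv * w n ^ 2 := by
        intro n; rw [heig n]; ring
      rw [Finset.sum_congr rfl fun n _ => this n, ← Finset.mul_sum, hn, mul_one]
    have h2 : ∑ n, ω (n - 1) * (w (n - 1) - w n) * w n
        = ∑ n, ω n * (w n - w (n + 1)) * w (n + 1) := by
      refine Fintype.sum_equiv (Equiv.subRight (1 : ZMod (2 * L + 1))) _ _ ?_
      intro n
      simp [sub_add_cancel]
    calc ∑ γ, ω γ * (w γ - w (γ + 1)) ^ 2
        = ∑ γ, (ω γ * (w γ - w (γ + 1)) * w γ - ω γ * (w γ - w (γ + 1)) * w (γ + 1)) := by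
          apply Finset.sum_congr rfl; intro γ _; ring
      _ = ∑ γ, ω γ * (w γ - w (γ + 1)) * w γ - ∑ γ, ω γ * (w γ - w (γ + 1)) * w (γ + 1) :=
          Finset.sum_sub_distrib _ _
      _ = ∑ γ, ω γ * (w γ - w (γ + 1)) * w γ - ∑ γ, ω (γ - 1) * (w (γ - 1) - w γ) * w γ := by
          rw [h2]
      _ = ∑ n, (ω n * (w n - w (n + 1)) - ω (n - 1) * (w (n - 1) - w n)) * w n := by
          rw [← Finset.sum_sub_distrib]; apply Finset.sum_congr rfl; intro γ _; ring
      _ = Evv := h1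
  have hu := key u Ev hunorm hueig
  have hv := key v Ev' hvnorm hveig
  have hsum : ∑ γ, ω γ * D γ = Ev - Ev' := by
    have : ∀ γ : ZMod (2 * L + 1), ω γ * D γ
        = ω γ * (u γ - u (γ + 1)) ^ 2 - ω γ * (v γ - v (γ + 1)) ^ 2 := by
      intro γ; rw [hDdef]; ring
    rw [Finset.sum_congr rfl fun γ _ => this γ, Finset.sum_sub_distrib, hu, hv]
  -- lower bound on |Ev - Ev'|
  have hlow : |E - E'| / 2 ≤ |Ev - Ev'| := by
    have htri : |E - E'| ≤ |Ev - Ev'| + (|Ev - E| + |Ev' - E'|) := by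
      have : E - E' = (Ev - Ev') - (Ev - E) + (Ev' - E') := by ring
      rw [this]
      calc |(Ev - Ev') - (Ev - E) + (Ev' - E')|
          ≤ |(Ev - Ev') - (Ev - E)| + |Ev' - E'| := abs_add_le _ _
        _ ≤ (|Ev - Ev'| + |Ev - E|) + |Ev' - E'| := by
            gcongr; exact abs_sub _ _
        _ = |Ev - Ev'| + (|Ev - E| + |Ev' - E'|) := by ring
    have := hclose.trans hLbig
    linarith
  -- Cauchy-Schwarz
  have hCS : (∑ γ, ω γ * D γ) ^ 2 ≤ (∑ γ : ZMod (2 * L + 1), ω γ ^ 2) * ∑ γ, D γ ^ 2 :=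
    Finset.sum_mul_sq_le_sq_mul_sq _ _ _
  have hωsq : (∑ γ : ZMod (2 * L + 1), ω γ ^ 2) ≤ (2 * L + 1) * β₀ ^ 2 := by
    have : ∀ γ : ZMod (2 * L + 1), ω γ ^ 2 ≤ β₀ ^ 2 := by
      intro γ
      have h := hω γ
      exact sq_le_sq' (by linarith [h.1]) h.2
    calc (∑ γ : ZMod (2 * L + 1), ω γ ^ 2) ≤ ∑ _γ : ZMod (2 * L + 1), β₀ ^ 2 :=
          Finset.sum_le_sum fun γ _ => this γ
      _ = (2 * L + 1) * β₀ ^ 2 := by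
          rw [Finset.sum_const, Finset.card_univ, ZMod.card, nsmul_eq_mul]
          push_cast; ring
  have hDnn : (0:ℝ) ≤ ∑ γ, D γ ^ 2 := Finset.sum_nonneg fun γ _ => sq_nonneg _
  have hEE : (|E - E'| / 2) ^ 2 ≤ ((2 * L + 1) * β₀ ^ 2) * ∑ γ, D γ ^ 2 := by
    have h1 : (|E - E'| / 2) ^ 2 ≤ |Ev - Ev'| ^ 2 := by
      have : (0:ℝ) ≤ |E - E'| / 2 := by positivity
      exact pow_le_pow_left₀ this hlow 2
    have h2 : |Ev - Ev'| ^ 2 = (∑ γ, ω γ * D γ) ^ 2 := by rw [hsum, sq_abs]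
    calc (|E - E'| / 2) ^ 2 ≤ (∑ γ, ω γ * D γ) ^ 2 := by rw [← h2]; exact h1
      _ ≤ (∑ γ : ZMod (2 * L + 1), ω γ ^ 2) * ∑ γ, D γ ^ 2 := hCS
      _ ≤ ((2 * L + 1) * β₀ ^ 2) * ∑ γ, D γ ^ 2 := by
          exact mul_le_mul_of_nonneg_right hωsq hDnn
  -- take square roots
  have hL1 : (0:ℝ) < 2 * (L:ℝ) + 1 := by positivity
  have hs : (0:ℝ) < Real.sqrt (2 * (L:ℝ) + 1) := Real.sqrt_pos.mpr hL1
  have h3 : |E - E'| / 2 ≤ Real.sqrt (2 * (L:ℝ) + 1) * β₀ * Real.sqrt (∑ γ, D γ ^ 2) := by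
    have hsq : Real.sqrt ((2 * (L:ℝ) + 1) * β₀ ^ 2) = Real.sqrt (2 * (L:ℝ) + 1) * β₀ := by
      rw [Real.sqrt_mul hL1.le, Real.sqrt_sq hβ0.le]
    calc |E - E'| / 2 = Real.sqrt ((|E - E'| / 2) ^ 2) := (Real.sqrt_sq (by positivity)).symm
      _ ≤ Real.sqrt (((2 * (L:ℝ) + 1) * β₀ ^ 2) * ∑ γ, D γ ^ 2) := by
          apply Real.sqrt_le_sqrt
          convert hEE using 3 <;> push_cast <;> ring
      _ = Real.sqrt (2 * (L:ℝ) + 1) * β₀ * Real.sqrt (∑ γ, D γ ^ 2) := by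
          rw [Real.sqrt_mul (by positivity), hsq]
  have hcast : Real.sqrt (2 * (L:ℝ) + 1) = Real.sqrt ((2 * L + 1 : ℕ) : ℝ) := by push_cast; ring_nf
  rw [show ((2 * (L:ℕ) + 1 : ℝ)) = 2 * (L:ℝ) + 1 by push_cast; ring] at *
  rw [div_mul_eq_mul_div, mul_one_div, div_div, div_le_iff₀ (by positivity)]
  nlinarith [h3, hs, Real.sqrt_nonneg (∑ γ, D γ ^ 2)]
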